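/- Lamport's bakery algorithm for two processes (Example 3) satisfies non-starvation for process 1 under fairness: for every fair event stream es and every position i, if the first component of the trace σ of es under step3 from initial state (T,T,0,0) at position i is W, then there exists j ≥ i such that the first component of σ j is U. -/
import Mathlib

inductive ProcState : Type where
  | T | W | U
deriving DecidableEq

inductive Event : Type where
  | request1 | request2 | take1 | take2 | release1 | release2
deriving DecidableEq

def trace {S : Type} (step : Event → S → S) (s0 : S) (es : ℕ → Event) : ℕ → S
  | 0 => s0
  | n + 1 => step (es n) (trace step s0 es n)

def Fair (es : ℕ → Event) : Prop := ∀ (e : Event) (n : ℕ), ∃ m, n ≤ m ∧ es m = e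

def step3 : Event → ProcState × ProcState × ℕ × ℕ → ProcState × ProcState × ℕ × ℕ
  | .request1, (s1, s2, t1, t2) =>
      if s1 = ProcState.T then (.W, s2, t2 + 1, t2) else (s1, s2, t1, t2)
  | .request2, (s1, s2, t1, t2) =>
      if s2 = ProcState.T then (s1, .W, t1, t1 + 1) else (s1, s2, t1, t2)
  | .take1, (s1, s2, t1, t2) =>
      if s1 = ProcState.W ∧ (s2 = ProcState.T ∨ t1 < t2) then (.U, s2, t1, t2)
      else (s1, s2, t1, t2)
  | .take2, (s1, s2, t1, t2) =>
      if s2 = ProcState.W ∧ (s1 = ProcState.T ∨ t2 < t1) then (s1, .U, t1, t2)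
      else (s1, s2, t1, t2)
  | .release1, (s1, s2, t1, t2) =>
      if s1 = ProcState.U then (.T, s2, 0, t2) else (s1, s2, t1, t2)
  | .release2, (s1, s2, t1, t2) =>
      if s2 = ProcState.U then (s1, .T, t1, 0) else (s1, s2, t1, t2)

abbrev BSt := ProcState × ProcState × ℕ × ℕ

def binit : BSt := (ProcState.T, ProcState.T, 0, 0)

def bσ (es : ℕ → Event) : ℕ → BSt := trace step3 binit es

lemma bσ_succ (es : ℕ → Event) (n : ℕ) : bσ es (n+1) = step3 (es n) (bσ es n) := rfl

def BInv (s : BSt) : Prop := s.1 ≠ .T → s.2.1 ≠ .T → s.2.2.1 ≠ s.2.2.2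

lemma binv_pres (ev : Event) (s : BSt) (h : BInv s) : BInv (step3 ev s) := by
  obtain ⟨s1, s2, t1, t2⟩ := s
  unfold BInv at *
  cases ev <;> simp only [step3] <;> split_ifs <;> simp_all <;> omega

lemma binv_trace (es : ℕ → Event) : ∀ n, BInv (bσ es n) := by
  intro n
  induction n with
  | zero => intro h; simp [bσ, binit, trace] at h
  | succ n ih => exact binv_pres _ _ ih

/-- Generic eventually lemma. -/
lemma breach (es : ℕ → Event) (hf : Fair es) (P : BSt → Prop) (e : Event)
    (hpres : ∀ n, P (bσ es n) →
      P (bσ es (n+1)) ∨ ∃ j, n + 1 ≤ j ∧ (bσ es j).1 = ProcState.U)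
    (hfire : ∀ n, es n = e → P (bσ es n) →
      ∃ j, n ≤ j ∧ (bσ es j).1 = ProcState.U) :
    ∀ n, P (bσ es n) → ∃ j, n ≤ j ∧ (bσ es j).1 = ProcState.U := by
  intro n hP
  obtain ⟨m, hnm, hem⟩ := hf e n
  have H : ∀ k, P (bσ es (n+k)) ∨ ∃ j, n ≤ j ∧ (bσ es j).1 = ProcState.U := by
    intro k
    induction k with
    | zero => exact Or.inl hP
    | succ k ih =>
      rcases ih with h | h
      · rcases hpres (n+k) h with h' | ⟨j, hj, hU⟩
        · exact Or.inl h'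
        · exact Or.inr ⟨j, by omega, hU⟩
      · exact Or.inr h
  rcases H (m - n) with h | h
  · rw [show n + (m-n) = m by omega] at h
    obtain ⟨j, hj, hU⟩ := hfire m hem h
    exact ⟨j, by omega, hU⟩
  · exact h

def bQ (s : BSt) : Prop := s.1 = .W ∧ (s.2.1 = .T ∨ s.2.2.1 < s.2.2.2)
def bQ3 (s : BSt) : Prop := s.1 = .W ∧ s.2.1 = .U
def bQ2 (s : BSt) : Prop := s.1 = .W ∧ s.2.1 = .W ∧ s.2.2.2 < s.2.2.1

lemma bQ_step (ev : Event) (s : BSt) (h : bQ s) :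
    bQ (step3 ev s) ∨ (step3 ev s).1 = ProcState.U := by
  obtain ⟨s1, s2, t1, t2⟩ := s
  unfold bQ at *
  cases ev <;> simp only [step3] <;> split_ifs <;> simp_all <;> omega

lemma bQ_fire (s : BSt) (h : bQ s) : (step3 .take1 s).1 = ProcState.U := by
  obtain ⟨s1, s2, t1, t2⟩ := s
  obtain ⟨h1, h2⟩ := h
  simp only [step3]
  rw [if_pos ⟨h1, h2⟩]

lemma from_bQ (es : ℕ → Event) (hf : Fair es) :
    ∀ n, bQ (bσ es n) → ∃ j, n ≤ j ∧ (bσ es j).1 = ProcState.U := by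
  apply breach es hf bQ .take1
  · intro n h
    rw [bσ_succ]
    rcases bQ_step (es n) _ h with h' | h'
    · exact Or.inl h'
    · exact Or.inr ⟨n+1, le_refl _, by rw [bσ_succ]; exact h'⟩
  · intro n he h
    refine ⟨n+1, by omega, ?_⟩
    rw [bσ_succ, he]
    exact bQ_fire _ h

lemma bQ3_step (ev : Event) (s : BSt) (h : bQ3 s) :
    bQ3 (step3 ev s) ∨ bQ (step3 ev s) ∨ (step3 ev s).1 = ProcState.U := by
  obtain ⟨s1, s2, t1, t2⟩ := s
  unfold bQ3 bQ at *
  cases ev <;> simp only [step3] <;> split_ifs <;> simp_all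

lemma bQ3_fire (s : BSt) (h : bQ3 s) : bQ (step3 .release2 s) := by
  obtain ⟨s1, s2, t1, t2⟩ := s
  unfold bQ3 bQ at *
  simp only [step3] <;> split_ifs <;> simp_all

lemma from_bQ3 (es : ℕ → Event) (hf : Fair es) :
    ∀ n, bQ3 (bσ es n) → ∃ j, n ≤ j ∧ (bσ es j).1 = ProcState.U := by
  apply breach es hf bQ3 .release2
  · intro n h
    rcases bQ3_step (es n) _ h with h' | h' | h'
    · exact Or.inl (by rw [bσ_succ]; exact h')
    · have h'' : bQ (bσ es (n+1)) := by rw [bσ_succ]; exact h'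
      exact Or.inr (from_bQ es hf (n+1) h'')
    · exact Or.inr ⟨n+1, le_refl _, by rw [bσ_succ]; exact h'⟩
  · intro n he h
    have hQ : bQ (bσ es (n+1)) := by rw [bσ_succ, he]; exact bQ3_fire _ h
    obtain ⟨j, hj, hU⟩ := from_bQ es hf (n+1) hQ
    exact ⟨j, by omega, hU⟩

lemma bQ2_step (ev : Event) (s : BSt) (h : bQ2 s) :
    bQ2 (step3 ev s) ∨ bQ3 (step3 ev s) := by
  obtain ⟨s1, s2, t1, t2⟩ := s
  unfold bQ2 bQ3 at *
  cases ev <;> simp only [step3] <;> split_ifs <;> simp_all <;> omega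

lemma bQ2_fire (s : BSt) (h : bQ2 s) : bQ3 (step3 .take2 s) := by
  obtain ⟨s1, s2, t1, t2⟩ := s
  unfold bQ2 bQ3 at *
  simp only [step3] <;> split_ifs <;> simp_all

lemma from_bQ2 (es : ℕ → Event) (hf : Fair es) :
    ∀ n, bQ2 (bσ es n) → ∃ j, n ≤ j ∧ (bσ es j).1 = ProcState.U := by
  apply breach es hf bQ2 .take2
  · intro n h
    rcases bQ2_step (es n) _ h with h' | h'
    · exact Or.inl (by rw [bσ_succ]; exact h')
    · have h'' : bQ3 (bσ es (n+1)) := by rw [bσ_succ]; exact h'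
      exact Or.inr (from_bQ3 es hf (n+1) h'')
  · intro n he h
    have hQ3 : bQ3 (bσ es (n+1)) := by rw [bσ_succ, he]; exact bQ2_fire _ h
    obtain ⟨j, hj, hU⟩ := from_bQ3 es hf (n+1) hQ3
    exact ⟨j, by omega, hU⟩

/-- Lamport's bakery algorithm (Example 3) satisfies non-starvation for process 1
under fairness. -/
theorem bakery_non_starvation_process1 :
    ∀ es : ℕ → Event, Fair es → ∀ i : ℕ,
      (trace step3 (ProcState.T, ProcState.T, 0, 0) es i).1 = ProcState.W →
      ∃ j, i ≤ j ∧
        (trace step3 (ProcState.T, ProcState.T, 0, 0) es j).1 = ProcState.U := by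
  intro es hf i h
  have hinv := binv_trace es i
  show ∃ j, i ≤ j ∧ (bσ es j).1 = ProcState.U
  have h1 : (bσ es i).1 = ProcState.W := h
  rcases h2 : (bσ es i).2.1 with _ | _ | _
  · exact from_bQ es hf i ⟨h1, Or.inl h2⟩
  · have hne : (bσ es i).2.2.1 ≠ (bσ es i).2.2.2 := by
      apply hinv <;> simp [h1, h2]
    rcases lt_or_gt_of_ne hne with hlt | hgt
    · exact from_bQ es hf i ⟨h1, Or.inr hlt⟩
    · exact from_bQ2 es hf i ⟨h1, h2, hgt⟩
  · exact from_bQ3 es hf i ⟨h1, h2⟩
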